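/- For p > 1 and G connected, the maximizer of Q_p on the unit p-sphere is unique up to sign: if x and y are both strictly positive unit-p-norm vectors with Q_p(x) = Q_p(y) = λ_p(G), then x = y. -/

import Mathlib

open Finset

variable {V : Type*}

/-- Signless p-Laplacian form: `Q_p(x) = Σ_{{i,j}∈E} |x_i + x_j|^p`. -/
noncomputable def Qp [Fintype V] (G : SimpleGraph V) [Fintype G.edgeSet] (p : ℝ)
    (x : V → ℝ) : ℝ :=
  ∑ e ∈ G.edgeFinset,
    Sym2.lift ⟨fun i j => |x i + x j| ^ p, fun i j => by simp [add_comm]⟩ e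

/-- The p-norm unit sphere condition. -/
def unitSphere [Fintype V] (p : ℝ) (x : V → ℝ) : Prop := ∑ i, |x i| ^ p = 1

/-- Smallest signless p-Laplacian eigenvalue. -/
noncomputable def qp [Fintype V] (G : SimpleGraph V) [Fintype G.edgeSet] (p : ℝ) : ℝ :=
  sInf {r | ∃ x : V → ℝ, unitSphere p x ∧ Qp G p x = r}

/-- Largest signless p-Laplacian eigenvalue. -/
noncomputable def lamp [Fintype V] (G : SimpleGraph V) [Fintype G.edgeSet] (p : ℝ) : ℝ :=
  sSup {r | ∃ x : V → ℝ, unitSphere p x ∧ Qp G p x = r}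

open Classical in
/-- Number of edges with both endpoints in `S`. -/
noncomputable def eIn [Fintype V] (G : SimpleGraph V) [Fintype G.edgeSet] (S : Finset V) : ℕ :=
  (G.edgeFinset.filter fun e => ∀ v ∈ e, v ∈ S).card

open Classical in
/-- Number of edges with exactly one endpoint in `U`. -/
noncomputable def cutN [Fintype V] (G : SimpleGraph V) [Fintype G.edgeSet] (U : Finset V) : ℕ :=
  (G.edgeFinset.filter fun e => (∃ v ∈ e, v ∈ U) ∧ (∃ w ∈ e, w ∉ U)).card

/-- Desai–Rao bipartiteness parameter ψ(G). -/
noncomputable def psi [Fintype V] [DecidableEq V] (G : SimpleGraph V) [Fintype G.edgeSet] : ℝ :=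
  sInf {r | ∃ S T : Finset V, Disjoint S T ∧ (S ∪ T).Nonempty ∧
    r = (2 * eIn G S + 2 * eIn G T + cutN G (S ∪ T)) / (S ∪ T).card}

open Classical in
/-- `h_g(U)`: min over thresholds `0 ≤ t < max g` of `cut(C_t)/|C_t|` where `C_t = {i : g i > t}`. -/
noncomputable def hgC [Fintype V] [DecidableEq V] (G : SimpleGraph V) [Fintype G.edgeSet]
    (g : V → ℝ) : ℝ :=
  sInf {r | ∃ t : ℝ, 0 ≤ t ∧ t < sSup (Set.range g) ∧
    r = (cutN G (univ.filter fun i => t < g i) : ℝ) / (univ.filter fun i => t < g i).card}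

/-- Eigenpair of the signless p-Laplacian. -/
def IsEigenpair [Fintype V] (G : SimpleGraph V) [DecidableRel G.Adj] (p : ℝ)
    (x : V → ℝ) (μ : ℝ) : Prop :=
  ∀ k, ∑ j ∈ G.neighborFinset k, Real.sign (x k + x j) * |x k + x j| ^ (p - 1)
      = μ * (Real.sign (x k) * |x k| ^ (p - 1))

/-- Vertex bipartiteness: minimum number of vertices to delete to make `G` bipartite. -/
noncomputable def nuG [Fintype V] [DecidableEq V] (G : SimpleGraph V) : ℕ :=
  sInf {k | ∃ S : Finset V, S.card = k ∧ ((SimpleGraph.induce ((↑S : Set V)ᶜ) G).Colorable 2)}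


/-- The function `s ↦ (1+s^p)^{1/p}` is strictly convex on `(0,∞)` for `p > 1`. -/
lemma phi_strictConvex (p : ℝ) (hp : 1 < p) :
    StrictConvexOn ℝ (Set.Ioi (0:ℝ)) (fun s => (1 + s ^ p) ^ p⁻¹) := by
  have hp0 : (0:ℝ) < p := lt_trans one_pos hp
  have key1 : ∀ s : ℝ, 0 < s → HasDerivAt (fun s => (1 + s ^ p) ^ p⁻¹)
      (s ^ (p-1) * (1 + s ^ p) ^ (p⁻¹ - 1)) s := by
    intro s hs
    have hB : (0:ℝ) < 1 + s ^ p := by positivity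
    have h1 : HasDerivAt (fun s : ℝ => 1 + s ^ p) (p * s ^ (p-1)) s := by
      simpa using ((Real.hasDerivAt_rpow_const (p := p) (Or.inl hs.ne')).const_add 1)
    have h2 : HasDerivAt (fun u : ℝ => u ^ p⁻¹) (p⁻¹ * (1 + s ^ p) ^ (p⁻¹ - 1)) (1 + s ^ p) :=
      Real.hasDerivAt_rpow_const (Or.inl hB.ne')
    have h3 := h2.comp s h1
    simp only [Function.comp_def] at h3
    refine h3.congr_deriv ?_
    symm
    field_simp
  have key2 : ∀ s : ℝ, 0 < s → HasDerivAt
      (fun s => s ^ (p-1) * (1 + s ^ p) ^ (p⁻¹ - 1))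
      ((p-1) * s ^ (p-2) * (1 + s ^ p) ^ (p⁻¹ - 2)) s := by
    intro s hs
    have hB : (0:ℝ) < 1 + s ^ p := by positivity
    have h1 : HasDerivAt (fun s : ℝ => s ^ (p-1)) ((p-1) * s ^ (p-1-1)) s :=
      Real.hasDerivAt_rpow_const (Or.inl hs.ne')
    have h2i : HasDerivAt (fun s : ℝ => 1 + s ^ p) (p * s ^ (p-1)) s := by
      simpa using ((Real.hasDerivAt_rpow_const (p := p) (Or.inl hs.ne')).const_add 1)
    have h2o : HasDerivAt (fun u : ℝ => u ^ (p⁻¹ - 1))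
        ((p⁻¹ - 1) * (1 + s ^ p) ^ (p⁻¹ - 1 - 1)) (1 + s ^ p) :=
      Real.hasDerivAt_rpow_const (Or.inl hB.ne')
    have h2 := h2o.comp s h2i
    simp only [Function.comp_def] at h2
    have h4 := h1.mul h2
    refine h4.congr_deriv ?_
    symm
    have e4 : s ^ (p-1) * s ^ (p-1) = s ^ (p-2) * s ^ p := by
      rw [← Real.rpow_add hs, ← Real.rpow_add hs]; congr 1; ring
    have hpp : p⁻¹ * p = 1 := inv_mul_cancel₀ hp0.ne'
    rw [show p - 1 - 1 = p - 2 by ring, show p⁻¹ - 1 - 1 = p⁻¹ - 2 by ring,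
      show (1 + s ^ p) ^ (p⁻¹ - 1) = (1 + s ^ p) ^ (p⁻¹ - 2) * (1 + s ^ p) by
        rw [show p⁻¹ - 1 = (p⁻¹ - 2) + 1 by ring, Real.rpow_add hB, Real.rpow_one]]
    linear_combination (-((p⁻¹-1)*p*(1 + s ^ p) ^ (p⁻¹-2)))*e4 +
      (-(s ^ (p-2)*(1 + s ^ p) ^ (p⁻¹-2)* s ^ p))*hpp
  apply strictConvexOn_of_deriv2_pos (convex_Ioi 0)
  · exact fun s hs => ((key1 s hs).continuousAt.continuousWithinAt)
  · rw [interior_Ioi]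
    intro s hs
    have hev : deriv (fun s => (1 + s ^ p) ^ p⁻¹)
        =ᶠ[nhds s] (fun s => s ^ (p-1) * (1 + s ^ p) ^ (p⁻¹ - 1)) := by
      filter_upwards [Ioi_mem_nhds hs] with t ht
      exact (key1 t ht).deriv
    have h2 : deriv^[2] (fun s => (1 + s ^ p) ^ p⁻¹) s
        = (p-1) * s ^ (p-2) * (1 + s ^ p) ^ (p⁻¹ - 2) := by
      show deriv (deriv _) s = _
      rw [hev.deriv_eq]
      exact (key2 s hs).deriv
    rw [h2]
    have hs' : (0:ℝ) < s := hs
    have hB : (0:ℝ) < 1 + s ^ p := by positivity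
    exact mul_pos (mul_pos (by linarith) (Real.rpow_pos_of_pos hs' _))
      (Real.rpow_pos_of_pos hB _)

lemma norm_phi (p : ℝ) (hp : 1 < p) {u v : ℝ} (hu : 0 < u) (hv : 0 < v) :
    (u ^ p + v ^ p) ^ p⁻¹ = v * (1 + (u / v) ^ p) ^ p⁻¹ := by
  have hp0 : (0:ℝ) < p := lt_trans one_pos hp
  have h0 : (u / v) ^ p * v ^ p = u ^ p := by
    rw [← Real.mul_rpow (by positivity) hv.le, div_mul_cancel₀ _ hv.ne']
  have h1 : u ^ p + v ^ p = (1 + (u / v) ^ p) * v ^ p := by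
    rw [← h0]; ring
  rw [h1, Real.mul_rpow (by positivity) (by positivity), Real.rpow_rpow_inv hv.le hp0.ne']
  ring

lemma mink_two (p : ℝ) (hp : 1 < p) {a b c d : ℝ}
    (ha : 0 < a) (hb : 0 < b) (hc : 0 < c) (hd : 0 < d) :
    ((a + b) ^ p + (c + d) ^ p) ^ p⁻¹ ≤ (a ^ p + c ^ p) ^ p⁻¹ + (b ^ p + d ^ p) ^ p⁻¹ ∧
    (a * d ≠ b * c →
      ((a + b) ^ p + (c + d) ^ p) ^ p⁻¹ < (a ^ p + c ^ p) ^ p⁻¹ + (b ^ p + d ^ p) ^ p⁻¹) := by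
  have hcd : (0:ℝ) < c + d := by linarith
  have hμ : (0:ℝ) < c / (c + d) := by positivity
  have hν : (0:ℝ) < d / (c + d) := by positivity
  have hμν : c / (c + d) + d / (c + d) = 1 := by field_simp
  have hmemS : a / c ∈ Set.Ioi (0:ℝ) := by simp [Set.mem_Ioi]; positivity
  have hmemT : b / d ∈ Set.Ioi (0:ℝ) := by simp [Set.mem_Ioi]; positivity
  have hmid : (c / (c + d)) • (a / c) + (d / (c + d)) • (b / d) = (a + b) / (c + d) := by
    simp only [smul_eq_mul]
    field_simp
  have hL : ((a + b) ^ p + (c + d) ^ p) ^ p⁻¹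
      = (c + d) * (1 + ((a + b) / (c + d)) ^ p) ^ p⁻¹ :=
    norm_phi p hp (by linarith) hcd
  have hR : (a ^ p + c ^ p) ^ p⁻¹ + (b ^ p + d ^ p) ^ p⁻¹
      = (c + d) * ((c / (c + d)) * (1 + (a / c) ^ p) ^ p⁻¹
          + (d / (c + d)) * (1 + (b / d) ^ p) ^ p⁻¹) := by
    rw [norm_phi p hp ha hc, norm_phi p hp hb hd]
    field_simp
  constructor
  · have hcvx := (phi_strictConvex p hp).convexOn.2 hmemS hmemT hμ.le hν.le hμν
    rw [hmid] at hcvx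
    rw [hL, hR]
    exact mul_le_mul_of_nonneg_left (by simpa using hcvx) hcd.le
  · intro hne
    have hst : a / c ≠ b / d := by
      rw [ne_eq, div_eq_div_iff hc.ne' hd.ne']
      exact hne
    have hcvx := (phi_strictConvex p hp).2 hmemS hmemT hst hμ hν hμν
    rw [hmid] at hcvx
    rw [hL, hR]
    exact mul_lt_mul_of_pos_left (by simpa using hcvx) hcd

lemma edge_key (p : ℝ) (hp : 1 < p) {a b c d : ℝ}
    (ha : 0 < a) (hb : 0 < b) (hc : 0 < c) (hd : 0 < d) :
    ((a + b) ^ p + (c + d) ^ p) / 2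
      ≤ (((a ^ p + c ^ p) / 2) ^ p⁻¹ + ((b ^ p + d ^ p) / 2) ^ p⁻¹) ^ p ∧
    (a * d ≠ b * c → ((a + b) ^ p + (c + d) ^ p) / 2
      < (((a ^ p + c ^ p) / 2) ^ p⁻¹ + ((b ^ p + d ^ p) / 2) ^ p⁻¹) ^ p) := by
  have hp0 : (0:ℝ) < p := lt_trans one_pos hp
  have hX : (0:ℝ) < a ^ p + c ^ p := by positivity
  have hY : (0:ℝ) < b ^ p + d ^ p := by positivity
  have hM : (0:ℝ) < (a + b) ^ p + (c + d) ^ p := by positivity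
  have hhalf : ∀ X : ℝ, 0 ≤ X → (X / 2) ^ p⁻¹ = (2:ℝ)⁻¹ ^ p⁻¹ * X ^ p⁻¹ := by
    intro X hX
    rw [div_eq_inv_mul, Real.mul_rpow (by norm_num) hX]
  have hKrw : (((a ^ p + c ^ p) / 2) ^ p⁻¹ + ((b ^ p + d ^ p) / 2) ^ p⁻¹) ^ p
      = 2⁻¹ * ((a ^ p + c ^ p) ^ p⁻¹ + (b ^ p + d ^ p) ^ p⁻¹) ^ p := by
    rw [hhalf _ hX.le, hhalf _ hY.le, ← mul_add,
      Real.mul_rpow (by positivity) (by positivity),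
      Real.rpow_inv_rpow (by norm_num) hp0.ne']
  have hMrw : ((a + b) ^ p + (c + d) ^ p) / 2
      = 2⁻¹ * (((a + b) ^ p + (c + d) ^ p) ^ p⁻¹) ^ p := by
    rw [Real.rpow_inv_rpow hM.le hp0.ne']; ring
  constructor
  · rw [hKrw, hMrw]
    apply mul_le_mul_of_nonneg_left _ (by norm_num)
    exact Real.rpow_le_rpow (by positivity) (mink_two p hp ha hb hc hd).1 hp0.le
  · intro hne
    rw [hKrw, hMrw]
    apply mul_lt_mul_of_pos_left _ (by norm_num)
    exact Real.rpow_lt_rpow (by positivity) ((mink_two p hp ha hb hc hd).2 hne) hp0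

noncomputable def Lfun (p : ℝ) (w : V → ℝ) : Sym2 V → ℝ :=
  Sym2.lift ⟨fun i j => |w i + w j| ^ p, fun i j => by simp [add_comm]⟩

lemma Qp_eq_sum_Lfun [Fintype V] (G : SimpleGraph V) [Fintype G.edgeSet] (p : ℝ) (w : V → ℝ) :
    Qp G p w = ∑ e ∈ G.edgeFinset, Lfun p w e := rfl

theorem stmt_13 [Fintype V] [DecidableEq V] (G : SimpleGraph V) [DecidableRel G.Adj]
    (hc : G.Connected) (p : ℝ) (hp : 1 < p) (x y : V → ℝ)
    (hxpos : ∀ i, 0 < x i) (hypos : ∀ i, 0 < y i)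
    (hx : unitSphere p x) (hy : unitSphere p y)
    (hxmax : Qp G p x = lamp G p) (hymax : Qp G p y = lamp G p) :
    x = y := by
  classical
  have hp0 : (0:ℝ) < p := lt_trans one_pos hp
  have hpne : p ≠ 0 := hp0.ne'
  set z : V → ℝ := fun i => ((x i ^ p + y i ^ p) / 2) ^ p⁻¹ with hzdef
  have hzpos : ∀ i, 0 < z i := fun i => Real.rpow_pos_of_pos
    (div_pos (add_pos (Real.rpow_pos_of_pos (hxpos i) p)
      (Real.rpow_pos_of_pos (hypos i) p)) two_pos) _
  have hxs : ∑ i, x i ^ p = 1 := by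
    unfold unitSphere at hx
    rw [← hx]; exact Finset.sum_congr rfl fun i _ => by rw [abs_of_pos (hxpos i)]
  have hys : ∑ i, y i ^ p = 1 := by
    unfold unitSphere at hy
    rw [← hy]; exact Finset.sum_congr rfl fun i _ => by rw [abs_of_pos (hypos i)]
  have hzp : ∀ i, z i ^ p = (x i ^ p + y i ^ p) / 2 := fun i =>
    Real.rpow_inv_rpow (div_pos (add_pos (Real.rpow_pos_of_pos (hxpos i) p)
      (Real.rpow_pos_of_pos (hypos i) p)) two_pos).le hpne
  have hzunit : unitSphere p z := by
    unfold unitSphere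
    rw [Finset.sum_congr rfl (fun i (_ : i ∈ univ) => by
      rw [abs_of_pos (hzpos i), hzp i] :
        ∀ i ∈ univ, |z i| ^ p = (x i ^ p + y i ^ p) / 2)]
    rw [← Finset.sum_div, Finset.sum_add_distrib, hxs, hys]
    norm_num
  -- boundedness of the Rayleigh quotients
  have hbdd : BddAbove {r | ∃ u : V → ℝ, unitSphere p u ∧ Qp G p u = r} := by
    refine ⟨(G.edgeFinset.card : ℝ) * 2 ^ p, ?_⟩
    rintro r ⟨u, hu, rfl⟩
    rw [Qp_eq_sum_Lfun]
    have habs : ∀ i, |u i| ≤ 1 := by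
      intro i
      have h1 : |u i| ^ p ≤ 1 := by
        unfold unitSphere at hu
        rw [← hu]
        exact Finset.single_le_sum (f := fun j => |u j| ^ p) (fun j _ => by positivity)
          (Finset.mem_univ i)
      calc |u i| = (|u i| ^ p) ^ p⁻¹ := (Real.rpow_rpow_inv (abs_nonneg _) hpne).symm
        _ ≤ 1 ^ p⁻¹ := Real.rpow_le_rpow (by positivity) h1 (by positivity)
        _ = 1 := Real.one_rpow _
    refine le_trans (Finset.sum_le_sum (g := fun _ => (2:ℝ) ^ p) fun e he => ?_)
      (by rw [Finset.sum_const, nsmul_eq_mul])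
    clear he
    induction e using Sym2.ind with
    | _ i j =>
      show |u i + u j| ^ p ≤ (2:ℝ) ^ p
      apply Real.rpow_le_rpow (abs_nonneg _) _ hp0.le
      calc |u i + u j| ≤ |u i| + |u j| := abs_add_le _ _
        _ ≤ 2 := by linarith [habs i, habs j]
  have hzle : Qp G p z ≤ lamp G p := le_csSup hbdd ⟨z, hzunit, rfl⟩
  -- per-edge inequalities
  have hLz : ∀ e ∈ G.edgeFinset, (Lfun p x e + Lfun p y e) / 2 ≤ Lfun p z e := by
    intro e _
    induction e using Sym2.ind with
    | _ i j =>
      show (|x i + x j| ^ p + |y i + y j| ^ p) / 2 ≤ |z i + z j| ^ p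
      rw [abs_of_pos (show (0:ℝ) < x i + x j from add_pos (hxpos i) (hxpos j)),
        abs_of_pos (show (0:ℝ) < y i + y j from add_pos (hypos i) (hypos j)),
        abs_of_pos (show (0:ℝ) < z i + z j from add_pos (hzpos i) (hzpos j))]
      exact (edge_key p hp (hxpos i) (hxpos j) (hypos i) (hypos j)).1
  have hsum_le : (Qp G p x + Qp G p y) / 2 ≤ Qp G p z := by
    rw [Qp_eq_sum_Lfun, Qp_eq_sum_Lfun, Qp_eq_sum_Lfun, ← Finset.sum_add_distrib,
      Finset.sum_div]
    exact Finset.sum_le_sum hLz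
  have heq : (Qp G p x + Qp G p y) / 2 = lamp G p := by rw [hxmax, hymax]; ring
  have hQz : Qp G p z = lamp G p := le_antisymm hzle (heq ▸ hsum_le)
  have hsum0 : ∑ e ∈ G.edgeFinset, (Lfun p z e - (Lfun p x e + Lfun p y e) / 2) = 0 := by
    rw [Finset.sum_sub_distrib, ← Finset.sum_div, Finset.sum_add_distrib,
      ← Qp_eq_sum_Lfun, ← Qp_eq_sum_Lfun, ← Qp_eq_sum_Lfun]
    rw [hQz, heq]
    ring
  have hzero : ∀ e ∈ G.edgeFinset, Lfun p z e - (Lfun p x e + Lfun p y e) / 2 = 0 :=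
    (Finset.sum_eq_zero_iff_of_nonneg fun e he => sub_nonneg.2 (hLz e he)).mp hsum0
  -- adjacent vertices have proportional coordinates
  have hratio : ∀ i j, G.Adj i j → x i / y i = x j / y j := by
    intro i j hij
    rw [div_eq_div_iff (hypos i).ne' (hypos j).ne']
    by_contra hne
    have hlt := (edge_key p hp (hxpos i) (hxpos j) (hypos i) (hypos j)).2 hne
    have he : s(i, j) ∈ G.edgeFinset := by
      rw [SimpleGraph.mem_edgeFinset]; exact hij
    have h0 := hzero _ he
    have h0' : |z i + z j| ^ p - (|x i + x j| ^ p + |y i + y j| ^ p) / 2 = 0 := h0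
    rw [abs_of_pos (show (0:ℝ) < x i + x j from add_pos (hxpos i) (hxpos j)),
      abs_of_pos (show (0:ℝ) < y i + y j from add_pos (hypos i) (hypos j)),
      abs_of_pos (show (0:ℝ) < z i + z j from add_pos (hzpos i) (hzpos j))] at h0'
    simp only [hzdef] at h0'
    linarith
  have hall : ∀ i j : V, x i / y i = x j / y j := by
    intro i j
    obtain ⟨w⟩ := hc.preconnected i j
    induction w with
    | nil => rfl
    | cons h q ih => exact (hratio _ _ h).trans ih
  haveI : Nonempty V := hc.nonempty
  obtain ⟨i0⟩ := ‹Nonempty V›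
  have hc0 : 0 < x i0 / y i0 := div_pos (hxpos i0) (hypos i0)
  have hxy : ∀ i, x i = (x i0 / y i0) * y i := fun i =>
    (div_eq_iff (hypos i).ne').mp (hall i i0)
  have h1 : (1:ℝ) = (x i0 / y i0) ^ p := by
    rw [← hxs, Finset.sum_congr rfl (fun i (_ : i ∈ univ) => by
      rw [hxy i, Real.mul_rpow hc0.le (hypos i).le] :
        ∀ i ∈ univ, x i ^ p = (x i0 / y i0) ^ p * y i ^ p),
      ← Finset.mul_sum, hys, mul_one]
  have hcone : x i0 / y i0 = 1 := by
    have h2 : (x i0 / y i0) ^ p = (1:ℝ) ^ p := by rw [Real.one_rpow]; exact h1.symm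
    exact (Real.rpow_left_inj hc0.le zero_le_one hpne).mp h2
  funext i
  rw [hxy i, hcone, one_mul]
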